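/- Setting x_i = 1/2 for all i and y_j = 1/2 for all j in the extended objective f gives f(x,y) = A(Q,c,d), the average objective value over all boolean pairs. Consequently, the round-and-optimize procedure (defining y* by y*_j = 1 iff d_j + Σ_i q_{ij}/2 > 0, then x* by x*_i = 1 iff c_i + Σ_j q_{ij} y*_j > 0) produces a boolean pair (x*,y*) with f(x*,y*) ≥ A(Q,c,d). -/

import Mathlib

open Finset

/-- The bipartite boolean quadratic objective f(x,y) = xᵀQy + c·x + d·y,
extended to real vectors. -/
noncomputable def fobj (m n : ℕ) (Q : Fin m → Fin n → ℝ) (c : Fin m → ℝ) (d : Fin n → ℝ)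
    (x : Fin m → ℝ) (y : Fin n → ℝ) : ℝ :=
  (∑ i, ∑ j, Q i j * x i * y j) + (∑ i, c i * x i) + (∑ j, d j * y j)

/-- A boolean vector viewed as a real 0-1 vector. -/
def bv {k : ℕ} (x : Fin k → Bool) : Fin k → ℝ := fun i => if x i then 1 else 0

/-- The average of f over all 2^(m+n) boolean pairs (x,y). -/
noncomputable def avgA (m n : ℕ) (Q : Fin m → Fin n → ℝ) (c : Fin m → ℝ) (d : Fin n → ℝ) : ℝ :=
  (∑ x : Fin m → Bool, ∑ y : Fin n → Bool, fobj m n Q c d (bv x) (bv y)) / 2 ^ (m + n)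

lemma sum_bv {k : ℕ} (i : Fin k) : ∑ x : Fin k → Bool, bv x i = 2 ^ k / 2 := by
  classical
  set e : Equiv.Perm (Fin k → Bool) :=
    Function.Involutive.toPerm (fun x => Function.update x i (!x i)) (by
      intro x
      funext j
      by_cases h : j = i
      · subst h; simp
      · simp [Function.update_of_ne h]) with he
  have hsum : ∀ x : Fin k → Bool, bv x i + bv (e x) i = 1 := by
    intro x
    simp only [he, Function.Involutive.toPerm, bv, Equiv.coe_fn_mk, Function.update_self]
    cases hx : x i <;> simp
  have h1 : (∑ x : Fin k → Bool, bv x i) = ∑ x : Fin k → Bool, bv (e x) i :=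
    (Equiv.sum_comp e (fun x => bv x i)).symm
  have h2 : (∑ x : Fin k → Bool, bv x i) + (∑ x : Fin k → Bool, bv x i)
      = ∑ x : Fin k → Bool, (bv x i + bv (e x) i) := by
    nth_rewrite 2 [h1]
    rw [← Finset.sum_add_distrib]
  have h3 : ∑ x : Fin k → Bool, (bv x i + bv (e x) i) = (2 : ℝ) ^ k := by
    simp only [hsum]
    simp [Finset.card_univ]
  have := h2.trans h3
  linarith

/-- f as a linear function of y. -/
lemma fobj_left (m n : ℕ) (Q : Fin m → Fin n → ℝ) (c : Fin m → ℝ) (d : Fin n → ℝ)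
    (x : Fin m → ℝ) (y : Fin n → ℝ) :
    fobj m n Q c d x y
      = (∑ j, y j * (d j + ∑ i, Q i j * x i)) + ∑ i, c i * x i := by
  simp only [fobj]
  rw [Finset.sum_comm (γ := Fin m) (s := univ) (t := univ)]
  have h : ∀ j ∈ (univ : Finset (Fin n)), y j * (d j + ∑ i, Q i j * x i)
      = (∑ i, Q i j * x i * y j) + d j * y j := by
    intro j _
    rw [mul_add, Finset.mul_sum,
      Finset.sum_congr rfl (fun i _ => (show y j * (Q i j * x i) = Q i j * x i * y j by ring))]
    ring
  rw [Finset.sum_congr rfl h, Finset.sum_add_distrib]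
  ring

/-- f as a linear function of x. -/
lemma fobj_right (m n : ℕ) (Q : Fin m → Fin n → ℝ) (c : Fin m → ℝ) (d : Fin n → ℝ)
    (x : Fin m → ℝ) (y : Fin n → ℝ) :
    fobj m n Q c d x y
      = (∑ i, x i * (c i + ∑ j, Q i j * y j)) + ∑ j, d j * y j := by
  simp only [fobj]
  have h : ∀ i ∈ (univ : Finset (Fin m)), x i * (c i + ∑ j, Q i j * y j)
      = (∑ j, Q i j * x i * y j) + c i * x i := by
    intro i _
    rw [mul_add, Finset.mul_sum,
      Finset.sum_congr rfl (fun j _ => (show x i * (Q i j * y j) = Q i j * x i * y j by ring))]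
    ring
  rw [Finset.sum_congr rfl h, Finset.sum_add_distrib]

lemma half_le_round (b : Bool) (t : ℝ) (hb : b = true ↔ 0 < t) :
    t / 2 ≤ (if b then (1 : ℝ) else 0) * t := by
  by_cases h : b = true
  · have ht := hb.mp h
    rw [if_pos h, one_mul]
    linarith
  · have ht : ¬ 0 < t := fun h' => h (hb.mpr h')
    push_neg at ht
    rw [if_neg h, zero_mul]
    linarith

lemma sum_fobj_left (m n : ℕ) (Q : Fin m → Fin n → ℝ) (c : Fin m → ℝ) (d : Fin n → ℝ)
    (x : Fin m → ℝ) :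
    ∑ y : Fin n → Bool, fobj m n Q c d x (bv y)
      = 2 ^ n * fobj m n Q c d x (fun _ => 1 / 2) := by
  have h : ∀ y : Fin n → Bool, fobj m n Q c d x (bv y)
      = (∑ j, bv y j * (d j + ∑ i, Q i j * x i)) + ∑ i, c i * x i :=
    fun y => fobj_left m n Q c d x (bv y)
  simp only [h]
  rw [Finset.sum_add_distrib, Finset.sum_comm, Finset.sum_const, Finset.card_univ]
  have h2 : ∀ j ∈ (univ : Finset (Fin n)),
      (∑ y : Fin n → Bool, bv y j * (d j + ∑ i, Q i j * x i))
      = (2 ^ n / 2) * (d j + ∑ i, Q i j * x i) := by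
    intro j _
    rw [← Finset.sum_mul, sum_bv]
  rw [Finset.sum_congr rfl h2, fobj_left m n Q c d x (fun _ => 1 / 2)]
  have hcard : Fintype.card (Fin n → Bool) = 2 ^ n := by simp
  rw [hcard, mul_add, Finset.mul_sum]
  congr 1
  · exact Finset.sum_congr rfl fun j _ => by ring
  · ring

lemma sum_fobj_right (m n : ℕ) (Q : Fin m → Fin n → ℝ) (c : Fin m → ℝ) (d : Fin n → ℝ)
    (y : Fin n → ℝ) :
    ∑ x : Fin m → Bool, fobj m n Q c d (bv x) y
      = 2 ^ m * fobj m n Q c d (fun _ => 1 / 2) y := by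
  have h : ∀ x : Fin m → Bool, fobj m n Q c d (bv x) y
      = (∑ i, bv x i * (c i + ∑ j, Q i j * y j)) + ∑ j, d j * y j :=
    fun x => fobj_right m n Q c d (bv x) y
  simp only [h]
  rw [Finset.sum_add_distrib, Finset.sum_comm, Finset.sum_const, Finset.card_univ]
  have h2 : ∀ i ∈ (univ : Finset (Fin m)),
      (∑ x : Fin m → Bool, bv x i * (c i + ∑ j, Q i j * y j))
      = (2 ^ m / 2) * (c i + ∑ j, Q i j * y j) := by
    intro i _
    rw [← Finset.sum_mul, sum_bv]
  rw [Finset.sum_congr rfl h2, fobj_right m n Q c d (fun _ => 1 / 2) y]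
  have hcard : Fintype.card (Fin m → Bool) = 2 ^ m := by simp
  rw [hcard, mul_add, Finset.mul_sum]
  congr 1
  · exact Finset.sum_congr rfl fun i _ => by ring
  · ring

lemma avg_eq (m n : ℕ) (Q : Fin m → Fin n → ℝ) (c : Fin m → ℝ) (d : Fin n → ℝ) :
    fobj m n Q c d (fun _ => 1 / 2) (fun _ => 1 / 2) = avgA m n Q c d := by
  have key : (∑ x : Fin m → Bool, ∑ y : Fin n → Bool, fobj m n Q c d (bv x) (bv y))
      = 2 ^ (m + n) * fobj m n Q c d (fun _ => 1 / 2) (fun _ => 1 / 2) := by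
    have h1 : ∀ x : Fin m → Bool,
        (∑ y : Fin n → Bool, fobj m n Q c d (bv x) (bv y))
        = 2 ^ n * fobj m n Q c d (bv x) (fun _ => 1 / 2) :=
      fun x => sum_fobj_left m n Q c d (bv x)
    simp only [h1]
    rw [← Finset.mul_sum, sum_fobj_right m n Q c d (fun _ => 1 / 2)]
    rw [pow_add]
    ring
  rw [avgA, key]
  have hpos : (0 : ℝ) < 2 ^ (m + n) := by positivity
  field_simp

theorem half_vector_rounding (m n : ℕ)
    (Q : Fin m → Fin n → ℝ) (c : Fin m → ℝ) (d : Fin n → ℝ)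
    (ystar : Fin n → Bool)
    (hys : ∀ j, ystar j = true ↔ 0 < d j + ∑ i, Q i j / 2)
    (xstar : Fin m → Bool)
    (hxs : ∀ i, xstar i = true ↔ 0 < c i + ∑ j, Q i j * bv ystar j) :
    fobj m n Q c d (fun _ => 1 / 2) (fun _ => 1 / 2) = avgA m n Q c d
    ∧ avgA m n Q c d ≤ fobj m n Q c d (bv xstar) (bv ystar) := by
  have h1 := avg_eq m n Q c d
  refine ⟨h1, ?_⟩
  rw [← h1]
  have hgy : ∀ j, (d j + ∑ i, Q i j * (1 / 2 : ℝ)) = d j + ∑ i, Q i j / 2 := by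
    intro j
    congr 1
    exact Finset.sum_congr rfl fun i _ => by ring
  have step1 : fobj m n Q c d (fun _ => 1 / 2) (fun _ => 1 / 2)
      ≤ fobj m n Q c d (fun _ => 1 / 2) (bv ystar) := by
    rw [fobj_left m n Q c d (fun _ => 1 / 2) (fun _ => 1 / 2),
        fobj_left m n Q c d (fun _ => 1 / 2) (bv ystar)]
    refine add_le_add ?_ le_rfl
    apply Finset.sum_le_sum
    intro j _
    have hb : ystar j = true ↔ 0 < d j + ∑ i, Q i j * (1 / 2 : ℝ) := by
      rw [hgy j]; exact hys j
    have h := half_le_round (ystar j) (d j + ∑ i, Q i j * (1 / 2 : ℝ)) hb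
    have hb2 : bv ystar j = if ystar j then (1 : ℝ) else 0 := rfl
    rw [hb2]
    have e : (1 / 2 : ℝ) * (d j + ∑ i, Q i j * (1 / 2 : ℝ))
        = (d j + ∑ i, Q i j * (1 / 2 : ℝ)) / 2 := by ring
    rw [e]
    exact h
  have step2 : fobj m n Q c d (fun _ => 1 / 2) (bv ystar)
      ≤ fobj m n Q c d (bv xstar) (bv ystar) := by
    rw [fobj_right m n Q c d (fun _ => 1 / 2) (bv ystar),
        fobj_right m n Q c d (bv xstar) (bv ystar)]
    refine add_le_add ?_ le_rfl
    apply Finset.sum_le_sum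
    intro i _
    have h := half_le_round (xstar i) (c i + ∑ j, Q i j * bv ystar j) (hxs i)
    have hb2 : bv xstar i = if xstar i then (1 : ℝ) else 0 := rfl
    rw [hb2]
    have e : (1 / 2 : ℝ) * (c i + ∑ j, Q i j * bv ystar j)
        = (c i + ∑ j, Q i j * bv ystar j) / 2 := by ring
    rw [e]
    exact h
  linarith
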